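/- Let T=(Q,Σ,→) be a finite transition system with a distinguished set Goal ⊆ Q of winning states, with Σ partitioned into controllable actions Σ_c and uncontrollable actions Σ_u. If ∼ is a bisimulation on Q compatible with Goal (i.e., q ∼ q' implies q ∈ Goal ↔ q' ∈ Goal), and q ∼ q', then there exists a winning strategy for the controller from q if and only if there exists a winning strategy from q'. -/

import Mathlib

section

variable {Q A : Type*}

/-- `ValidRun step q l`: the list `l` of (action, state) pairs is a run of the
transition system `step` starting from `q`. -/
def ValidRun (step : Q → A → Q → Prop) : Q → List (A × Q) → Prop
  | _, [] => True
  | q, (a, q') :: l => step q a q' ∧ ValidRun step q' l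

/-- Last state of the run starting at `q` with steps `l`. -/
def lastState (q : Q) (l : List (A × Q)) : Q :=
  (l.getLast?.map Prod.snd).getD q

/-- A strategy (a partial function from finite runs from `q₀` to controllable actions)
proposing only enabled controllable actions. -/
def IsStrategy (step : Q → A → Q → Prop) (Sc : Set A) (q₀ : Q)
    (σ : List (A × Q) → Option A) : Prop :=
  ∀ l : List (A × Q), ValidRun step q₀ l → ∀ a, σ l = some a →
    a ∈ Sc ∧ ∃ q', step (lastState q₀ l) a q'

/-- A finite run is compatible with a strategy: each action taken is either the
proposed controllable action or an uncontrollable one. -/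
def FinCompatible (Su : Set A) (σ : List (A × Q) → Option A) (l : List (A × Q)) : Prop :=
  ∀ i : ℕ, ∀ h : i < l.length, σ (l.take i) = some (l.get ⟨i, h⟩).1 ∨ (l.get ⟨i, h⟩).1 ∈ Su

/-- An infinite compatible run from `q₀`. -/
def InfCompatible (step : Q → A → Q → Prop) (Su : Set A) (q₀ : Q)
    (σ : List (A × Q) → Option A) (ρ : ℕ → A × Q) : Prop :=
  (∀ n : ℕ, step (lastState q₀ (List.ofFn (fun i : Fin n => ρ i))) (ρ n).1 (ρ n).2) ∧
  (∀ n : ℕ, σ (List.ofFn (fun i : Fin n => ρ i)) = some (ρ n).1 ∨ (ρ n).1 ∈ Su)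

/-- The strategy `σ` is winning from `q₀`: every maximal finite compatible run and
every infinite compatible run visits `Goal`. -/
def WinningStrategy (step : Q → A → Q → Prop) (Su : Set A) (Goal : Set Q) (q₀ : Q)
    (σ : List (A × Q) → Option A) : Prop :=
  (∀ l : List (A × Q), ValidRun step q₀ l → FinCompatible Su σ l → σ l = none →
      (q₀ ∈ Goal ∨ ∃ p ∈ l, p.2 ∈ Goal)) ∧
  (∀ ρ : ℕ → A × Q, InfCompatible step Su q₀ σ ρ → (q₀ ∈ Goal ∨ ∃ n, (ρ n).2 ∈ Goal))

lemma lastState_cons (q r : Q) (b : A) (l : List (A × Q)) :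
    lastState q ((b, r) :: l) = lastState r l := by
  cases l with
  | nil => simp [lastState]
  | cons x l =>
    simp only [lastState, List.getLast?_cons_cons]
    rcases h : (x :: l).getLast? with _ | y
    · simp at h
    · simp [h]

lemma validRun_take (step : Q → A → Q → Prop) :
    ∀ (l : List (A × Q)) (q : Q), ValidRun step q l → ∀ n, ValidRun step q (l.take n)
  | [], q, _, n => by simp [ValidRun]
  | (a, p) :: l, q, h, 0 => trivial
  | (a, p) :: l, q, h, n + 1 => ⟨h.1, validRun_take step l p h.2 n⟩

lemma validRun_append_singleton (step : Q → A → Q → Prop) :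
    ∀ (l : List (A × Q)) (q : Q) (a : A) (p : Q),
    ValidRun step q (l ++ [(a, p)]) ↔ ValidRun step q l ∧ step (lastState q l) a p := by
  intro l
  induction l with
  | nil => intro q a p; simp [ValidRun, lastState]
  | cons x l ih =>
    rintro q a p
    obtain ⟨b, r⟩ := x
    rw [List.cons_append]
    show (step q b r ∧ _) ↔ _
    rw [ih, lastState_cons]
    show _ ↔ (step q b r ∧ _) ∧ _
    tauto

lemma take_get_append {α : Type*} (l : List α) (n : ℕ) (h : n < l.length) :
    l.take n ++ [l.get ⟨n, h⟩] = l.take (n + 1) := by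
  rw [List.get_eq_getElem, ← List.concat_eq_append, List.take_concat_get]

/-- Translation of runs along a bisimulation, given a choice function `pick`. -/
def trRun (pick : Q → Q → A → Q → Q) : Q → Q → List (A × Q) → List (A × Q)
  | _, _, [] => []
  | s, s', (a, p) :: l => (a, pick s s' a p) :: trRun pick p (pick s s' a p) l

lemma trRun_length (pick : Q → Q → A → Q → Q) :
    ∀ (l : List (A × Q)) (s s' : Q), (trRun pick s s' l).length = l.length
  | [], _, _ => rfl
  | (a, p) :: l, s, s' => by
    simp [trRun, trRun_length pick l]

lemma trRun_take (pick : Q → Q → A → Q → Q) :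
    ∀ (l : List (A × Q)) (n : ℕ) (s s' : Q),
      trRun pick s s' (l.take n) = (trRun pick s s' l).take n
  | [], n, s, s' => by simp [trRun]
  | (a, p) :: l, 0, s, s' => rfl
  | (a, p) :: l, n + 1, s, s' => by
    simp only [List.take_succ_cons, trRun, trRun_take pick l n]

lemma trRun_spec (step : Q → A → Q → Prop) (sim : Q → Q → Prop)
    (pick : Q → Q → A → Q → Q)
    (hpick : ∀ s s' a p, sim s s' → step s a p →
      sim p (pick s s' a p) ∧ step s' a (pick s s' a p)) :
    ∀ (l : List (A × Q)) (s s' : Q), sim s s' → ValidRun step s l →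
      ValidRun step s' (trRun pick s s' l) ∧
      (∀ i (h : i < l.length) (h' : i < (trRun pick s s' l).length),
        ((trRun pick s s' l).get ⟨i, h'⟩).1 = (l.get ⟨i, h⟩).1 ∧
        sim (l.get ⟨i, h⟩).2 ((trRun pick s s' l).get ⟨i, h'⟩).2) ∧
      sim (lastState s l) (lastState s' (trRun pick s s' l)) := by
  intro l
  induction l with
  | nil =>
    intro s s' hs _
    exact ⟨trivial, fun i h => absurd h (by simp), hs⟩
  | cons x l ih =>
    rintro s s' hs ⟨hstep, hval⟩
    obtain ⟨a, p⟩ := x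
    obtain ⟨hsimp, hstep'⟩ := hpick s s' a p hs hstep
    obtain ⟨ih1, ih2, ih3⟩ := ih p (pick s s' a p) hsimp hval
    refine ⟨⟨hstep', ih1⟩, ?_, ?_⟩
    · intro i h h'
      cases i with
      | zero => exact ⟨rfl, hsimp⟩
      | succ i =>
        exact ih2 i (by simpa using h) (by simpa [trRun] using h')
    · show sim (lastState s ((a, p) :: l)) (lastState s' ((a, pick s s' a p) :: _))
      rw [lastState_cons, lastState_cons]
      exact ih3

lemma winning_transfer (step : Q → A → Q → Prop) (Goal : Set Q) (Sc Su : Set A)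
    (sim : Q → Q → Prop) (hsymm : ∀ {a b : Q}, sim a b → sim b a)
    (hbisim : ∀ q₁ q₁' q₂ : Q, ∀ a : A, sim q₁ q₁' → step q₁ a q₂ →
        ∃ q₂' : Q, sim q₂ q₂' ∧ step q₁' a q₂')
    (hGoal : ∀ q q' : Q, sim q q' → (q ∈ Goal ↔ q' ∈ Goal))
    (q q' : Q) (hqq' : sim q q')
    (σ : List (A × Q) → Option A)
    (hstrat : IsStrategy step Sc q σ) (hwin : WinningStrategy step Su Goal q σ) :
    ∃ σ', IsStrategy step Sc q' σ' ∧ WinningStrategy step Su Goal q' σ' := by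
  classical
  -- a choice function for the bisimulation
  set pick : Q → Q → A → Q → Q := fun s s' a p =>
    if h : sim s s' ∧ step s a p then (hbisim s s' p a h.1 h.2).choose else p with hpickdef
  have hpick : ∀ s s' a p, sim s s' → step s a p →
      sim p (pick s s' a p) ∧ step s' a (pick s s' a p) := by
    intro s s' a p h1 h2
    simp only [hpickdef, dif_pos (And.intro h1 h2)]
    exact (hbisim s s' p a h1 h2).choose_spec
  have hq'q : sim q' q := hsymm hqq'
  -- the translated strategy
  refine ⟨fun l => σ (trRun pick q' q l), ?_, ?_, ?_⟩
  · -- IsStrategy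
    intro l hval a ha
    obtain ⟨h1, h2, h3⟩ := trRun_spec step sim pick hpick l q' q hq'q hval
    obtain ⟨haSc, p, hp⟩ := hstrat _ h1 a ha
    obtain ⟨p', _, hp'⟩ := hbisim _ _ p a (hsymm h3) hp
    exact ⟨haSc, p', hp'⟩
  · -- finite maximal runs
    intro l hval hcomp hnone
    obtain ⟨h1, h2, h3⟩ := trRun_spec step sim pick hpick l q' q hq'q hval
    have hcomp' : FinCompatible Su σ (trRun pick q' q l) := by
      intro i h
      have hi : i < l.length := (trRun_length pick l q' q) ▸ h
      rw [← trRun_take, (h2 i hi h).1]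
      exact hcomp i hi
    rcases (hwin.1 _ h1 hcomp' hnone) with hg | ⟨p, hp, hpg⟩
    · exact Or.inl ((hGoal q q' hqq').1 hg)
    · obtain ⟨i, hi⟩ := List.get_of_mem hp
      have hil : i.1 < l.length := (trRun_length pick l q' q) ▸ i.2
      refine Or.inr ⟨l.get ⟨i.1, hil⟩, List.get_mem _ _, ?_⟩
      have := (h2 i.1 hil i.2).2
      rw [hi] at this
      exact (hGoal _ _ this).2 hpg
  · -- infinite runs
    intro ρ' hρ'
    set L : ℕ → List (A × Q) := fun n => List.ofFn (fun i : Fin n => ρ' i) with hL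
    have hLsucc : ∀ n, L (n + 1) = L n ++ [ρ' n] := by
      intro n
      simp only [hL, List.ofFn_succ', List.concat_eq_append, Fin.coe_castSucc, Fin.val_last]
    have hLlen : ∀ n, (L n).length = n := by intro n; simp [hL]
    have hLval : ∀ n, ValidRun step q' (L n) := by
      intro n
      induction n with
      | zero => trivial
      | succ n ih =>
        rw [hLsucc n, validRun_append_singleton]
        exact ⟨ih, hρ'.1 n⟩
    -- the translated infinite run
    have hlen : ∀ n, n < (trRun pick q' q (L (n + 1))).length := by
      intro n; rw [trRun_length, hLlen]; omega
    set ρ : ℕ → A × Q := fun n => (trRun pick q' q (L (n + 1))).get ⟨n, hlen n⟩ with hρdef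
    have htake : ∀ n, trRun pick q' q (L n) = (trRun pick q' q (L (n + 1))).take n := by
      intro n
      rw [← trRun_take]
      congr 1
      rw [hLsucc n, List.take_append_of_le_length (by rw [hLlen])]
      simp [hLlen]
    have hofFn : ∀ n, List.ofFn (fun i : Fin n => ρ i) = trRun pick q' q (L n) := by
      intro n
      induction n with
      | zero => rfl
      | succ n ih =>
        rw [List.ofFn_succ', List.concat_eq_append]
        have : (List.ofFn fun i : Fin n => ρ i.castSucc) = List.ofFn fun i : Fin n => ρ i := by
          simp
        rw [this, ih, htake n]
        simp only [Fin.val_last]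
        rw [show ρ n = (trRun pick q' q (L (n + 1))).get ⟨n, hlen n⟩ from rfl,
          take_get_append _ n (hlen n),
          List.take_of_length_le (by rw [trRun_length, hLlen])]
    have hρspec : ∀ n, ValidRun step q (trRun pick q' q (L n)) ∧
        (ρ n).1 = (ρ' n).1 ∧ sim (ρ' n).2 (ρ n).2 := by
      intro n
      obtain ⟨h1, h2, _⟩ := trRun_spec step sim pick hpick (L (n + 1)) q' q hq'q (hLval (n + 1))
      have hn : n < (L (n + 1)).length := by rw [hLlen]; omega
      have hget : (L (n + 1)).get ⟨n, hn⟩ = ρ' n := by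
        simp only [hL, List.get_eq_getElem, List.getElem_ofFn]
      obtain ⟨ha, hb⟩ := h2 n hn (hlen n)
      rw [hget] at ha hb
      refine ⟨?_, ha, hb⟩
      · obtain ⟨h1', _, _⟩ := trRun_spec step sim pick hpick (L n) q' q hq'q (hLval n)
        exact h1'
    have hinf : InfCompatible step Su q σ ρ := by
      constructor
      · intro n
        rw [hofFn n]
        obtain ⟨h1, _, _⟩ := trRun_spec step sim pick hpick (L (n + 1)) q' q hq'q (hLval (n + 1))
        have heq : trRun pick q' q (L (n + 1)) = trRun pick q' q (L n) ++ [ρ n] := by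
          rw [htake n, show ρ n = (trRun pick q' q (L (n + 1))).get ⟨n, hlen n⟩ from rfl,
            take_get_append _ n (hlen n),
            List.take_of_length_le (by rw [trRun_length, hLlen])]
        rw [heq] at h1
        exact ((validRun_append_singleton step _ q (ρ n).1 (ρ n).2).mp h1).2
      · intro n
        rw [hofFn n, (hρspec n).2.1]
        exact hρ'.2 n
    rcases hwin.2 ρ hinf with hg | ⟨n, hn⟩
    · exact Or.inl ((hGoal q q' hqq').1 hg)
    · exact Or.inr ⟨n, (hGoal _ _ (hρspec n).2.2).2 hn⟩

/-- in a finite transition system with winning states `Goal` and actions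
partitioned into controllable `Sc` and uncontrollable `Su`, if `∼` is a bisimulation
compatible with `Goal` and `q ∼ q'`, then the controller has a winning strategy from `q`
iff it has one from `q'`. -/
theorem bisimulation_preserves_winning
    [Finite Q] [Finite A]
    (step : Q → A → Q → Prop) (Goal : Set Q) (Sc Su : Set A)
    (hpart : Sc ∪ Su = Set.univ) (hdisj : Disjoint Sc Su)
    (sim : Q → Q → Prop) (hequiv : Equivalence sim)
    (hbisim : ∀ q₁ q₁' q₂ : Q, ∀ a : A, sim q₁ q₁' → step q₁ a q₂ →
        ∃ q₂' : Q, sim q₂ q₂' ∧ step q₁' a q₂')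
    (hGoal : ∀ q q' : Q, sim q q' → (q ∈ Goal ↔ q' ∈ Goal))
    (q q' : Q) (hqq' : sim q q') :
    (∃ σ, IsStrategy step Sc q σ ∧ WinningStrategy step Su Goal q σ) ↔
    (∃ σ, IsStrategy step Sc q' σ ∧ WinningStrategy step Su Goal q' σ) := by
  have hsymm : ∀ {a b : Q}, sim a b → sim b a := fun h => hequiv.symm h
  constructor
  · rintro ⟨σ, h1, h2⟩
    exact winning_transfer step Goal Sc Su sim hsymm hbisim hGoal q q' hqq' σ h1 h2
  · rintro ⟨σ, h1, h2⟩
    exact winning_transfer step Goal Sc Su sim hsymm hbisim hGoal q' q (hsymm hqq') σ h1 h2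

end
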